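/- Let n ≥ 2 be an integer, m₊ > 0, and 0 < β < 1/(n(n−1)). Set θ = β/(n(n−1)·m₊). Let V and S be independent nonnegative random variables with E[S] > 0, S ≤ m₊ almost surely, and E[e^{θV}] < ∞, and let λ > 0 satisfy λ·E[S] = (n−1)/n + (n−1)·β. Suppose (θ/n)·E[e^{θV}] + λ·(E[e^{θ·(V−S)⁺}] − E[e^{θV}]) ≥ 0. Then for every x ≥ 0, P(V ≥ x) ≤ ((n+1)/(n·β))·exp(−β·x/(n(n−1)·m₊)). -/

import Mathlib

set_option maxHeartbeats 1000000


open MeasureTheory ProbabilityTheory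

lemma exp_neg_quad_bound {t : ℝ} (ht : 0 ≤ t) : Real.exp (-t) ≤ 1 - t + t^2/2 := by
  have h1 : 1 + t + t^2/2 ≤ Real.exp t := Real.quadratic_le_exp_of_nonneg ht
  have hp : 0 < Real.exp t := Real.exp_pos t
  have hq : (1:ℝ) ≤ (1 - t + t^2/2) * Real.exp t := by nlinarith [sq_nonneg (t-1), sq_nonneg (t^2)]
  rw [Real.exp_neg, inv_eq_one_div, div_le_iff₀ hp]
  linarith

lemma card_arith_num (N β : ℝ) (hN : 2 ≤ N) (hβ0 : 0 < β) (hb : β * (N*(N-1)) < 1) :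
    0 ≤ (N + 1) * ((N - 1 + (N - 1) * β * N) * (2 * N * (N - 1) - β) - 2 * (N - 1) * N) -
      (N - 1 + (N - 1) * β * N) * (N * β) * (2 * N * (N - 1)) := by
  have hN0 : (0:ℝ) < N := by linarith
  have hN1 : (1:ℝ) ≤ N - 1 := by linarith
  have hβN : β * N ≤ 1 := by nlinarith
  have hβh : β ≤ 1/2 := by nlinarith
  have key : (N + 1) * ((N - 1 + (N - 1) * β * N) * (2 * N * (N - 1) - β) - 2 * (N - 1) * N) -
      (N - 1 + (N - 1) * β * N) * (N * β) * (2 * N * (N - 1))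
      = 2*(N*(N-1))*((N+1)*(N-2) + N*β*(N*(N-1))*(1-β)) - (N^2-1)*β*(1+β*N) := by ring
  rw [key]
  have hsq : (0:ℝ) ≤ N^2 - 1 := by nlinarith [sq_nonneg (N-2)]
  have h1 : (N^2-1)*β*(1+β*N) ≤ 2*((N^2-1)*β) := by
    nlinarith [mul_nonneg (sub_nonneg.mpr hβN) (mul_nonneg hsq hβ0.le)]
  have h2 : N*(N*(N-1))^2*β ≤ 2*(N*(N-1))*(N*β*(N*(N-1))*(1-β)) := by
    nlinarith [mul_nonneg (by linarith : (0:ℝ) ≤ 1 - 2*β) (by positivity : (0:ℝ) ≤ N*(N*(N-1))^2*β)]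
  have e1 : N^3 ≤ N*(N*(N-1))^2 := by
    nlinarith [mul_nonneg (mul_nonneg hN0.le hN0.le) (mul_nonneg hN0.le (mul_nonneg (by linarith : (0:ℝ) ≤ N-2) (by linarith : (0:ℝ) ≤ N)))]
  have e2 : 2*(N^2-1) ≤ N^3 := by
    nlinarith [mul_nonneg (mul_nonneg hN0.le hN0.le) (by linarith : (0:ℝ) ≤ N-2)]
  have h3 : 2*((N^2-1)*β) ≤ N*(N*(N-1))^2*β := by
    nlinarith [mul_le_mul_of_nonneg_right (e2.trans e1) hβ0.le]
  have h4 : (0:ℝ) ≤ 2*(N*(N-1))*((N+1)*(N-2)) := by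
    have h5 : (0:ℝ) ≤ (N+1)*(N-2) := mul_nonneg (by linarith) (by linarith)
    have h6 : (0:ℝ) ≤ N*(N-1) := mul_nonneg hN0.le (by linarith)
    nlinarith [mul_nonneg h6 h5]
  nlinarith [h1, h2, h3, h4]

lemma card_arith_main (N β : ℝ) (hN : 2 ≤ N) (hβ0 : 0 < β) (hb : β * (N*(N-1)) < 1) :
    (((N-1)/N + (N-1)*β)) * (N*β) ≤ (N+1) * (((N-1)/N + (N-1)*β) * (1 - (β/(N*(N-1)))/2) - 1/N) := by
  have hN0 : (0:ℝ) < N := by linarith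
  have hN1 : (0:ℝ) < N - 1 := by linarith
  rw [← sub_nonneg]
  have key : (N+1) * (((N-1)/N + (N-1)*β) * (1 - (β/(N*(N-1)))/2) - 1/N) - (((N-1)/N + (N-1)*β)) * (N*β)
      = ((N+1) * ((N-1 + (N-1)*β*N) * (2*N*(N-1) - β) - 2*(N-1)*N) - (N-1 + (N-1)*β*N) * (N*β) * (2*N*(N-1)))
        / (2*N*N*(N-1)) := by
    field_simp
  rw [key]
  exact div_nonneg (card_arith_num N β hN hβ0 hb) (by positivity)

lemma card_arith_pos (N β : ℝ) (hN : 2 ≤ N) (hβ0 : 0 < β) (hb : β * (N*(N-1)) < 1) :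
    0 < ((N-1)/N + (N-1)*β) * (1 - (β/(N*(N-1)))/2) - 1/N := by
  have hN0 : (0:ℝ) < N := by linarith
  have hN1 : (0:ℝ) < N - 1 := by linarith
  have hNβ : 0 < N * β := by positivity
  have h := card_arith_main N β hN hβ0 hb
  have ha : 0 < (N-1)/N + (N-1)*β := by positivity
  nlinarith [mul_pos ha hNβ]

/-- Abstract form of Lemma 5.3 (idleness bound of a short server under CARD): with
`θ = β/(n(n−1)m₊)`, job sizes bounded by `m₊`, load `λE[S] = (n−1)/n + (n−1)β`, and the
rate-conservation inequality, one gets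
`P(V ≥ x) ≤ ((n+1)/(nβ))·exp(−βx/(n(n−1)m₊))` for all `x ≥ 0`. -/
theorem stmt8
    {Ω : Type*} [MeasurableSpace Ω] (μ : Measure Ω) [IsProbabilityMeasure μ]
    (n : ℕ) (hn : 2 ≤ n)
    (mp β : ℝ) (hmp : 0 < mp) (hβ0 : 0 < β)
    (hβ1 : β < 1 / ((n : ℝ) * ((n : ℝ) - 1)))
    (θ : ℝ) (hθ : θ = β / ((n : ℝ) * ((n : ℝ) - 1) * mp))
    (V S : Ω → ℝ) (hV_meas : Measurable V) (hS_meas : Measurable S)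
    (hV_nonneg : ∀ ω, 0 ≤ V ω) (hS_nonneg : ∀ ω, 0 ≤ S ω)
    (hindep : IndepFun V S μ)
    (hS_int : Integrable S μ) (hES_pos : 0 < ∫ ω, S ω ∂μ)
    (hS_bdd : ∀ᵐ ω ∂μ, S ω ≤ mp)
    (hexp : Integrable (fun ω => Real.exp (θ * V ω)) μ)
    (lam : ℝ) (hlam : 0 < lam)
    (hload : lam * ∫ ω, S ω ∂μ = ((n : ℝ) - 1) / n + ((n : ℝ) - 1) * β)
    (hRCL : 0 ≤ (θ / n) * (∫ ω, Real.exp (θ * V ω) ∂μ)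
        + lam * ((∫ ω, Real.exp (θ * max (V ω - S ω) 0) ∂μ)
          - ∫ ω, Real.exp (θ * V ω) ∂μ)) :
    ∀ x : ℝ, 0 ≤ x →
      (μ {ω | x ≤ V ω}).toReal ≤
        (((n : ℝ) + 1) / ((n : ℝ) * β))
          * Real.exp (-(β * x) / ((n : ℝ) * ((n : ℝ) - 1) * mp)) := by
  intro x hx
  set N : ℝ := (n : ℝ) with hNdef
  have hN2 : (2:ℝ) ≤ N := by simp only [hNdef]; exact_mod_cast hn
  have hN0 : (0:ℝ) < N := by linarith
  have hN1 : (0:ℝ) < N - 1 := by linarith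
  have hD : (0:ℝ) < N * (N - 1) := by positivity
  have hb : β * (N * (N - 1)) < 1 := by
    rw [lt_div_iff₀ hD] at hβ1; linarith
  have hθpos : 0 < θ := by rw [hθ]; positivity
  have hθmp : θ * mp = β / (N * (N - 1)) := by
    rw [hθ]; field_simp
  -- notation
  set Ψ : ℝ := ∫ ω, Real.exp (θ * V ω) ∂μ with hΨdef
  set Φ : ℝ := ∫ ω, Real.exp (θ * max (V ω - S ω) 0) ∂μ with hΦdef
  set ES : ℝ := ∫ ω, S ω ∂μ with hESdef
  set a : ℝ := (N - 1) / N + (N - 1) * β with hadef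
  -- Ψ ≥ 0
  have hΨ0 : 0 ≤ Ψ := integral_nonneg fun ω => (Real.exp_pos _).le
  -- integrability of exp(-θ S)
  have hSexp_meas : Measurable fun ω => Real.exp (-θ * S ω) :=
    (hS_meas.const_mul _).exp
  have hSexp_int : Integrable (fun ω => Real.exp (-θ * S ω)) μ := by
    refine (integrable_const (1:ℝ)).mono' hSexp_meas.aestronglyMeasurable ?_
    filter_upwards with ω
    rw [Real.norm_eq_abs, abs_of_pos (Real.exp_pos _)]
    exact Real.exp_le_one_iff.mpr (by nlinarith [hS_nonneg ω, hθpos])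
  -- independence of the exponentials
  have hindep2 : IndepFun (fun ω => Real.exp (θ * V ω)) (fun ω => Real.exp (-θ * S ω)) μ :=
    hindep.comp (Real.measurable_exp.comp (measurable_id.const_mul θ))
      (Real.measurable_exp.comp (measurable_id.const_mul (-θ)))
  have hmul_int : Integrable (fun ω => Real.exp (θ * V ω) * Real.exp (-θ * S ω)) μ :=
    hindep2.integrable_mul hexp hSexp_int
  have hmul_eq : ∫ ω, Real.exp (θ * V ω) * Real.exp (-θ * S ω) ∂μ
      = Ψ * ∫ ω, Real.exp (-θ * S ω) ∂μ :=
    hindep2.integral_fun_mul_eq_mul_integral hexp.aestronglyMeasurable hSexp_int.aestronglyMeasurable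
  -- pointwise bound for the jump term
  have hpt : ∀ ω, Real.exp (θ * max (V ω - S ω) 0)
      ≤ Real.exp (θ * V ω) * Real.exp (-θ * S ω) + θ * S ω := by
    intro ω
    have hprod : Real.exp (θ * V ω) * Real.exp (-θ * S ω) = Real.exp (θ * (V ω - S ω)) := by
      rw [← Real.exp_add]; ring_nf
    rcases le_total (S ω) (V ω) with h | h
    · rw [max_eq_left (by linarith), hprod]
      nlinarith [mul_nonneg hθpos.le (hS_nonneg ω)]
    · rw [max_eq_right (by linarith), hprod, mul_zero, Real.exp_zero]
      have h1 : 1 + θ * (V ω - S ω) ≤ Real.exp (θ * (V ω - S ω)) := by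
        linarith [Real.add_one_le_exp (θ * (V ω - S ω))]
      nlinarith [mul_nonneg hθpos.le (hV_nonneg ω)]
  -- Φ ≤ Ψ E' + θ ES
  have hrhs_int : Integrable (fun ω => Real.exp (θ * V ω) * Real.exp (-θ * S ω) + θ * S ω) μ :=
    hmul_int.add (hS_int.const_mul θ)
  have hΦ_int : Integrable (fun ω => Real.exp (θ * max (V ω - S ω) 0)) μ := by
    refine hrhs_int.mono' ((((hV_meas.sub hS_meas).max measurable_const).const_mul
      θ).exp).aestronglyMeasurable ?_
    filter_upwards with ω
    rw [Real.norm_eq_abs, abs_of_pos (Real.exp_pos _)]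
    exact hpt ω
  have hΦle : Φ ≤ Ψ * (∫ ω, Real.exp (-θ * S ω) ∂μ) + θ * ES := by
    calc Φ ≤ ∫ ω, (Real.exp (θ * V ω) * Real.exp (-θ * S ω) + θ * S ω) ∂μ :=
          integral_mono hΦ_int hrhs_int hpt
      _ = Ψ * (∫ ω, Real.exp (-θ * S ω) ∂μ) + θ * ES := by
          rw [integral_add hmul_int (hS_int.const_mul θ), hmul_eq, integral_const_mul]
  -- E' ≤ 1 + (θ²mp/2 − θ) ES
  have hE'le : (∫ ω, Real.exp (-θ * S ω) ∂μ) ≤ 1 + (θ^2 * mp / 2 - θ) * ES := by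
    have hbd : ∀ᵐ ω ∂μ, Real.exp (-θ * S ω) ≤ 1 + (θ^2 * mp / 2 - θ) * S ω := by
      filter_upwards [hS_bdd] with ω hSω
      have ht : 0 ≤ θ * S ω := mul_nonneg hθpos.le (hS_nonneg ω)
      have h1 : Real.exp (-(θ * S ω)) ≤ 1 - θ * S ω + (θ * S ω)^2/2 := exp_neg_quad_bound ht
      have h2 : (θ * S ω)^2 ≤ θ^2 * mp * S ω := by
        nlinarith [mul_nonneg (mul_nonneg (sq_nonneg θ) (hS_nonneg ω)) (sub_nonneg.mpr hSω)]
      calc Real.exp (-θ * S ω) = Real.exp (-(θ * S ω)) := by ring_nf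
        _ ≤ 1 - θ * S ω + (θ * S ω)^2/2 := h1
        _ ≤ 1 + (θ^2 * mp / 2 - θ) * S ω := by nlinarith
    calc (∫ ω, Real.exp (-θ * S ω) ∂μ)
        ≤ ∫ ω, (1 + (θ^2 * mp / 2 - θ) * S ω) ∂μ :=
          integral_mono_ae hSexp_int ((integrable_const 1).add (hS_int.const_mul (θ^2 * mp / 2 - θ))) hbd
      _ = 1 + (θ^2 * mp / 2 - θ) * ES := by
          rw [integral_add (integrable_const 1) (hS_int.const_mul (θ^2 * mp / 2 - θ)), integral_const,
            integral_const_mul, probReal_univ, smul_eq_mul, mul_one]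
  -- combine with RCL: Ψ * c ≤ a, with c := a(1 − θmp/2) − 1/N
  have hlamES : lam * ES = a := hload
  have hkey : Ψ * (a * (1 - (θ * mp) / 2) - 1 / N) ≤ a := by
    have h1 : Φ - Ψ ≤ Ψ * ((θ^2 * mp / 2 - θ) * ES) + θ * ES := by
      have := mul_le_mul_of_nonneg_left (by linarith [hE'le] : (∫ ω, Real.exp (-θ * S ω) ∂μ) - 1 ≤ (θ^2 * mp / 2 - θ) * ES) hΨ0
      nlinarith [hΦle]
    have h2 : 0 ≤ (θ / N) * Ψ + lam * (Ψ * ((θ^2 * mp / 2 - θ) * ES) + θ * ES) := by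
      have := mul_le_mul_of_nonneg_left h1 hlam.le
      linarith [hRCL]
    -- rewrite lam * ES = a and divide by θ
    have h3 : 0 ≤ (θ / N) * Ψ + Ψ * ((θ^2 * mp / 2 - θ) * a) + θ * a := by
      have e : lam * (Ψ * ((θ^2 * mp / 2 - θ) * ES) + θ * ES)
          = Ψ * ((θ^2 * mp / 2 - θ) * (lam * ES)) + θ * (lam * ES) := by ring
      rw [e, hlamES] at h2
      linarith
    have h4 : 0 ≤ θ * ((1 / N) * Ψ + Ψ * ((θ * mp / 2 - 1) * a) + a) := by
      have e : θ * ((1 / N) * Ψ + Ψ * ((θ * mp / 2 - 1) * a) + a)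
          = (θ / N) * Ψ + Ψ * ((θ^2 * mp / 2 - θ) * a) + θ * a := by ring
      rw [e]; exact h3
    have h5 : 0 ≤ (1 / N) * Ψ + Ψ * ((θ * mp / 2 - 1) * a) + a :=
      nonneg_of_mul_nonneg_right h4 hθpos
    nlinarith [h5]
  have hcpos : 0 < a * (1 - (θ * mp) / 2) - 1 / N := by
    have := card_arith_pos N β hN2 hβ0 hb
    rw [hθmp]; exact this
  have hΨle : Ψ ≤ (N + 1) / (N * β) := by
    have hmain := card_arith_main N β hN2 hβ0 hb
    rw [← hθmp] at hmain
    -- a * (N β) ≤ (N+1) * c, Ψ c ≤ a  ⟹ Ψ ≤ (N+1)/(Nβ)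
    rw [le_div_iff₀ (by positivity : (0:ℝ) < N * β)]
    have h6 : Ψ * (a * (1 - (θ * mp) / 2) - 1 / N) * (N * β) ≤ a * (N * β) :=
      mul_le_mul_of_nonneg_right hkey (by positivity)
    have h7 : Ψ * (N * β) * (a * (1 - (θ * mp) / 2) - 1 / N) ≤ (N + 1) * (a * (1 - (θ * mp) / 2) - 1 / N) := by
      calc Ψ * (N * β) * (a * (1 - (θ * mp) / 2) - 1 / N)
          = Ψ * (a * (1 - (θ * mp) / 2) - 1 / N) * (N * β) := by ring
        _ ≤ a * (N * β) := h6
        _ ≤ (N + 1) * (a * (1 - (θ * mp) / 2) - 1 / N) := hmain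
    exact le_of_mul_le_mul_right h7 hcpos
  -- Markov inequality
  have hmarkov : Real.exp (θ * x) * (μ {ω | x ≤ V ω}).toReal ≤ Ψ := by
    have hset : {ω | Real.exp (θ * x) ≤ Real.exp (θ * V ω)} = {ω | x ≤ V ω} := by
      ext ω
      simp only [Set.mem_setOf_eq, Real.exp_le_exp]
      exact mul_le_mul_iff_right₀ hθpos
    have := mul_meas_ge_le_integral_of_nonneg
      (f := fun ω => Real.exp (θ * V ω))
      (Filter.Eventually.of_forall fun ω => (Real.exp_pos _).le) hexp (Real.exp (θ * x))
    rwa [hset] at this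
  have hfinal : (μ {ω | x ≤ V ω}).toReal ≤ Ψ * Real.exp (-(θ * x)) := by
    have hepos : 0 < Real.exp (θ * x) := Real.exp_pos _
    rw [Real.exp_neg, ← div_eq_mul_inv, le_div_iff₀ hepos]
    linarith [hmarkov]
  have hexp_eq : Real.exp (-(θ * x)) = Real.exp (-(β * x) / (N * (N - 1) * mp)) := by
    congr 1
    rw [hθ]; field_simp
  calc (μ {ω | x ≤ V ω}).toReal ≤ Ψ * Real.exp (-(θ * x)) := hfinal
    _ ≤ ((N + 1) / (N * β)) * Real.exp (-(θ * x)) :=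
        mul_le_mul_of_nonneg_right hΨle (Real.exp_pos _).le
    _ = ((N + 1) / (N * β)) * Real.exp (-(β * x) / (N * (N - 1) * mp)) := by rw [hexp_eq]
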